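/- arXiv:2312.03363 — 12 statements merged into one kernel-verified Lean document; each statement's English description precedes it below -/
import Mathlib

section
/- Let x, x̂ : I → ℝ² be differentiable curves on an interval I forming a Darboux pair with parameter λ ∈ ℝ \ {0} and polarization m : I → ℝ \ {0}, and suppose |x'(t)|² ≠ 0 for all t. Then x̂'(t) = −(λ/(m(t)|x'(t)|²)) · ( |x̂(t)−x(t)|² x'(t) − 2⟨x̂(t)−x(t), x'(t)⟩ (x̂(t)−x(t)) ) for all t ∈ I. -/
/-- The split-complex product on `ℝ²`: `(a,b)·(c,d) = (ac+bd, ad+bc)`. -/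
def sprod (u v : ℝ × ℝ) : ℝ × ℝ := (u.1 * v.1 + u.2 * v.2, u.1 * v.2 + u.2 * v.1)

/-- The Lorentz bilinear form `⟨(a,b),(c,d)⟩ = ac - bd`. -/
def lin (u v : ℝ × ℝ) : ℝ := u.1 * v.1 - u.2 * v.2

/-- The Lorentz squared norm `|(a,b)|² = a² - b²`. -/
def lsq (u : ℝ × ℝ) : ℝ := u.1 ^ 2 - u.2 ^ 2

/-- `x, x̂` form a Darboux pair with parameter `λ` and polarization `m` on `I`,
with respect to given derivative functions `x', x̂'`:
`x'·x̂' = (λ/m)(x̂−x)·(x̂−x)` pointwise on `I`. -/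
def DarbouxPair (I : Set ℝ) (x x' xh xh' : ℝ → ℝ × ℝ) (lam : ℝ) (m : ℝ → ℝ) : Prop :=
  ∀ t ∈ I, sprod (x' t) (xh' t) = (lam / m t) • sprod (xh t - x t) (xh t - x t)

/-- For a Darboux pair with `x` spacelike (non-lightlike), the derivative of `x̂` is
`x̂' = −(λ/(m|x'|²)) (|x̂−x|² x' − 2⟨x̂−x, x'⟩ (x̂−x))`. -/
theorem darboux_deriv (I : Set ℝ) (hI : I.OrdConnected)
    (x xh x' xh' : ℝ → ℝ × ℝ) (lam : ℝ) (hlam : lam ≠ 0)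
    (m : ℝ → ℝ) (hm : ∀ t ∈ I, m t ≠ 0)
    (hx : ∀ t ∈ I, HasDerivAt x (x' t) t)
    (hxh : ∀ t ∈ I, HasDerivAt xh (xh' t) t)
    (hpair : DarbouxPair I x x' xh xh' lam m)
    (hsp : ∀ t ∈ I, lsq (x' t) ≠ 0) :
    ∀ t ∈ I, xh' t = (-(lam / (m t * lsq (x' t)))) •
      (lsq (xh t - x t) • x' t - (2 * lin (xh t - x t) (x' t)) • (xh t - x t)) := by
  intro t ht
  have h := hpair t ht
  have hmt := hm t ht
  have hs : (x' t).1 ^ 2 - (x' t).2 ^ 2 ≠ 0 := hsp t ht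
  have h1 := congrArg Prod.fst h
  have h2 := congrArg Prod.snd h
  simp only [sprod, Prod.smul_fst, Prod.smul_snd, Prod.fst_sub, Prod.snd_sub,
    smul_eq_mul] at h1 h2
  field_simp at h1 h2
  apply Prod.ext
  · simp only [lsq, lin, Prod.smul_fst, Prod.smul_snd, Prod.fst_sub, Prod.snd_sub, smul_eq_mul]
    field_simp
    linear_combination (x' t).1 * h1 - (x' t).2 * h2
  · simp only [lsq, lin, Prod.smul_fst, Prod.smul_snd, Prod.fst_sub, Prod.snd_sub, smul_eq_mul]
    field_simp
    linear_combination (x' t).1 * h2 - (x' t).2 * h1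
end

section
/- Let x, x̂ : I → ℝ² be differentiable curves forming a Darboux pair with parameter λ ∈ ℝ \ {0} and the arc-length polarization m(t) = 1/|x'(t)|², where |x'(t)|² > 0 for all t. Then the function h(t) = |x̂(t)−x(t)|² satisfies the differential equation h'(t) = 2⟨x̂(t)−x(t), x'(t)⟩ (λ h(t) − 1) for all t ∈ I. -/
/-- For a Darboux pair with the arc-length polarization `m = 1/|x'|²` of `x`,
the function `h = |x̂−x|²` satisfies `h' = 2⟨x̂−x, x'⟩(λh − 1)`. -/
theorem darboux_arclength_ode (I : Set ℝ)
    (x xh x' xh' : ℝ → ℝ × ℝ) (lam : ℝ) (hlam : lam ≠ 0)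
    (m : ℝ → ℝ)
    (hsp : ∀ t ∈ I, 0 < lsq (x' t))
    (hm : ∀ t ∈ I, m t = 1 / lsq (x' t))
    (hx : ∀ t ∈ I, HasDerivAt x (x' t) t)
    (hxh : ∀ t ∈ I, HasDerivAt xh (xh' t) t)
    (hpair : DarbouxPair I x x' xh xh' lam m) :
    ∀ t ∈ I, HasDerivAt (fun s => lsq (xh s - x s))
      (2 * lin (xh t - x t) (x' t) * (lam * lsq (xh t - x t) - 1)) t := by
  intro t ht
  have hL : lsq (x' t) ≠ 0 := ne_of_gt (hsp t ht)
  have hpe := hpair t ht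
  rw [hm t ht] at hpe
  have hc : lam / (1 / lsq (x' t)) = lam * lsq (x' t) := by
    field_simp
  rw [hc] at hpe
  have hd : HasDerivAt (fun s => xh s - x s) (xh' t - x' t) t :=
    (hxh t ht).sub (hx t ht)
  have hd1 : HasDerivAt (fun s => (xh s - x s).1) ((xh' t - x' t).1) t := hd.fst
  have hd2 : HasDerivAt (fun s => (xh s - x s).2) ((xh' t - x' t).2) t := hd.snd
  have hD : HasDerivAt (fun s => (xh s - x s).1 ^ 2 - (xh s - x s).2 ^ 2)
      (2 * (xh t - x t).1 * ((xh' t - x' t).1) - 2 * (xh t - x t).2 * ((xh' t - x' t).2)) t := by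
    have h := ((hd1.fun_pow 2).fun_sub (hd2.fun_pow 2))
    refine h.congr_deriv ?_
    push_cast
    ring
  have heq : (2 * (xh t - x t).1 * ((xh' t - x' t).1) - 2 * (xh t - x t).2 * ((xh' t - x' t).2))
      = 2 * lin (xh t - x t) (x' t) * (lam * lsq (xh t - x t) - 1) := by
    obtain ⟨e1, e2⟩ := Prod.ext_iff.mp hpe
    simp only [sprod, lsq, lin, Prod.smul_fst, Prod.smul_snd, smul_eq_mul,
      Prod.fst_sub, Prod.snd_sub] at e1 e2 ⊢
    set a := (xh t).1 - (x t).1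
    set b := (xh t).2 - (x t).2
    set p := (x' t).1
    set q := (x' t).2
    have hL' : p ^ 2 - q ^ 2 ≠ 0 := by simpa [lsq, p, q] using hL
    have key : (p ^ 2 - q ^ 2) * (2 * (a * p + b * q - (a * q + b * p)) * 0 + (2 * a * ((xh' t).1 - (x' t).1) - 2 * b * ((xh' t).2 - (x' t).2)))
        = (p ^ 2 - q ^ 2) * (2 * (a * p - b * q) * (lam * (a ^ 2 - b ^ 2) - 1)) := by
      linear_combination (2 * (a * p + b * q)) * e1 + (2 * (-b * p - a * q)) * e2
    have := mul_left_cancel₀ hL' key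
    linarith [this]
  rw [← heq]
  exact hD.congr_deriv rfl |>.congr_of_eventuallyEq (by filter_upwards with s; simp [lsq])
end

section
/- Let x, x̂ : I → ℝ² be continuously differentiable curves on an interval I forming a Darboux pair with parameter λ ∈ ℝ \ {0} and the arc-length polarization m(t) = 1/|x'(t)|², where |x'(t)|² > 0 for all t. If |x̂(t₀)−x(t₀)|² = 1/λ at one point t₀ ∈ I, then |x̂(t)−x(t)|² = 1/λ for all t ∈ I. -/
/-- For a C¹ Darboux pair on an interval, arc-length polarized for `x`,
if `|x̂−x|² = 1/λ` at one point, then `|x̂−x|² = 1/λ` everywhere. -/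
theorem darboux_constant_distance (I : Set ℝ) (hI : I.OrdConnected)
    (x xh x' xh' : ℝ → ℝ × ℝ) (lam : ℝ) (hlam : lam ≠ 0)
    (m : ℝ → ℝ)
    (hsp : ∀ t ∈ I, 0 < lsq (x' t))
    (hm : ∀ t ∈ I, m t = 1 / lsq (x' t))
    (hx : ∀ t ∈ I, HasDerivAt x (x' t) t)
    (hxh : ∀ t ∈ I, HasDerivAt xh (xh' t) t)
    (hx'c : ContinuousOn x' I) (hxh'c : ContinuousOn xh' I)
    (hpair : DarbouxPair I x x' xh xh' lam m)
    (t₀ : ℝ) (ht₀ : t₀ ∈ I) (hinit : lsq (xh t₀ - x t₀) = 1 / lam) :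
    ∀ t ∈ I, lsq (xh t - x t) = 1 / lam := by
  -- the scalar quantities
  set f : ℝ → ℝ := fun s => lsq (xh s - x s) with hf_def
  set G : ℝ → ℝ := fun s => (xh s - x s).1 * (x' s).1 - (xh s - x s).2 * (x' s).2 with hG_def
  -- continuity of G on I
  have hdc : ContinuousOn (fun s => xh s - x s) I := fun s hs =>
    (((hxh s hs).sub (hx s hs)).continuousAt).continuousWithinAt
  have hGc : ContinuousOn G I :=
    ((hdc.fst.mul hx'c.fst).sub (hdc.snd.mul hx'c.snd))
  -- the key derivative formula
  have key : ∀ t ∈ I, HasDerivAt f (2 * G t * (lam * f t - 1)) t := by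
    intro t ht
    have hL : lsq (x' t) ≠ 0 := (hsp t ht).ne'
    have hc : lam / m t = lam * lsq (x' t) := by
      rw [hm t ht]; field_simp
    have heq := hpair t ht
    rw [hc] at heq
    have eqA : (x' t).1 * (xh' t).1 + (x' t).2 * (xh' t).2
        = lam * lsq (x' t) * ((xh t - x t).1 * (xh t - x t).1 + (xh t - x t).2 * (xh t - x t).2) := by
      have := congrArg Prod.fst heq
      simpa [sprod] using this
    have eqB : (x' t).1 * (xh' t).2 + (x' t).2 * (xh' t).1
        = lam * lsq (x' t) * ((xh t - x t).1 * (xh t - x t).2 + (xh t - x t).2 * (xh t - x t).1) := by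
      have := congrArg Prod.snd heq
      simpa [sprod] using this
    simp only [lsq] at eqA eqB
    have hkey : (xh t - x t).1 * (xh' t).1 - (xh t - x t).2 * (xh' t).2
        = lam * ((xh t - x t).1 ^ 2 - (xh t - x t).2 ^ 2)
          * ((xh t - x t).1 * (x' t).1 - (xh t - x t).2 * (x' t).2) := by
      apply mul_left_cancel₀ (by simpa [lsq] using hL : (x' t).1 ^ 2 - (x' t).2 ^ 2 ≠ 0)
      linear_combination ((xh t - x t).1 * (x' t).1 + (xh t - x t).2 * (x' t).2) * eqA
        - ((xh t - x t).1 * (x' t).2 + (xh t - x t).2 * (x' t).1) * eqB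
    -- component derivatives
    have hx1 : HasDerivAt (fun s => (x s).1) ((x' t).1) t := by
      simpa using ((hx t ht).hasFDerivAt.fst).hasDerivAt
    have hx2 : HasDerivAt (fun s => (x s).2) ((x' t).2) t := by
      simpa using ((hx t ht).hasFDerivAt.snd).hasDerivAt
    have hxh1 : HasDerivAt (fun s => (xh s).1) ((xh' t).1) t := by
      simpa using ((hxh t ht).hasFDerivAt.fst).hasDerivAt
    have hxh2 : HasDerivAt (fun s => (xh s).2) ((xh' t).2) t := by
      simpa using ((hxh t ht).hasFDerivAt.snd).hasDerivAt
    have hd1 := hxh1.sub hx1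
    have hd2 := hxh2.sub hx2
    have hD := (hd1.pow 2).sub (hd2.pow 2)
    have hfun : (fun s => ((xh s).1 - (x s).1) ^ 2 - ((xh s).2 - (x s).2) ^ 2) = f := by
      funext s; simp [hf_def, lsq]
    simp only [Pi.sub_def, Pi.pow_def] at hD
    rw [hfun] at hD
    refine hD.congr_deriv ?_
    symm
    have hft : f t = (xh t - x t).1 ^ 2 - (xh t - x t).2 ^ 2 := by simp [hf_def, lsq]
    have hGt : G t = (xh t - x t).1 * (x' t).1 - (xh t - x t).2 * (x' t).2 := rfl
    have h1 : (xh t).1 - (x t).1 = (xh t - x t).1 := by simp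
    have h2 : (xh t).2 - (x t).2 = (xh t - x t).2 := by simp
    rw [hft, hGt, h1, h2]
    push_cast
    linear_combination (-2) * hkey
  -- now fix a target point and set up the ODE uniqueness on the interval
  intro t₁ ht₁
  have hIcc : Set.uIcc t₀ t₁ ⊆ I := hI.uIcc_subset ht₀ ht₁
  set a := min t₀ t₁
  set b := max t₀ t₁
  have hab : Set.Icc a b ⊆ I := hIcc
  -- bound for G on Icc a b
  obtain ⟨M, hM⟩ := (isCompact_Icc (a := a) (b := b)).exists_bound_of_continuousOn
    (hGc.mono hab)
  have hM0 : 0 ≤ M := le_trans (norm_nonneg _) (hM a (Set.left_mem_Icc.2 (min_le_max)))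
  set K : NNReal := Real.toNNReal (2 * M * |lam|) with hK_def
  set v : ℝ → ℝ → ℝ := fun s y => if s ∈ Set.Icc a b then 2 * G s * (lam * y - 1) else 0
    with hv_def
  have hv : ∀ s, LipschitzOnWith K (v s) Set.univ := by
    intro s
    rw [lipschitzOnWith_iff_dist_le_mul]
    intro y _ z _
    by_cases hs : s ∈ Set.Icc a b
    · simp only [hv_def, if_pos hs, Real.dist_eq]
      have h1 : 2 * G s * (lam * y - 1) - 2 * G s * (lam * z - 1) = (2 * G s * lam) * (y - z) := by
        ring
      rw [h1, abs_mul]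
      have h2 : |2 * G s * lam| ≤ (K : ℝ) := by
        rw [hK_def, Real.coe_toNNReal _ (by positivity)]
        rw [abs_mul, abs_mul]
        have := hM s hs
        rw [Real.norm_eq_abs] at this
        have h3 : |(2:ℝ)| = 2 := by norm_num
        rw [h3]
        nlinarith [abs_nonneg lam, abs_nonneg (G s)]
      exact mul_le_mul_of_nonneg_right h2 (abs_nonneg _)
    · simp only [hv_def]
      rw [if_neg hs, if_neg hs, dist_self]
      exact mul_nonneg K.coe_nonneg (dist_nonneg (x := y) (y := z))
  -- the two solutions
  have hfc : ContinuousOn f (Set.Icc a b) := fun s hs =>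
    ((key s (hab hs)).continuousAt).continuousWithinAt
  have hgc : ContinuousOn (fun _ : ℝ => 1 / lam) (Set.Icc a b) := continuousOn_const
  have hg' : ∀ s ∈ Set.Icc a b, HasDerivAt (fun _ : ℝ => 1 / lam) (v s (1 / lam)) s := by
    intro s hs
    have : v s (1 / lam) = 0 := by
      simp only [hv_def, if_pos hs]
      field_simp
      ring
    rw [this]
    exact hasDerivAt_const s _
  have hf' : ∀ s ∈ Set.Icc a b, HasDerivAt f (v s (f s)) s := by
    intro s hs
    have : v s (f s) = 2 * G s * (lam * f s - 1) := by simp only [hv_def, if_pos hs]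
    rw [this]
    exact key s (hab hs)
  have hmem : ∀ s ∈ Set.Icc a b, f s ∈ (Set.univ : Set ℝ) := fun _ _ => Set.mem_univ _
  have hmem' : ∀ s ∈ Set.Icc a b, (1 / lam) ∈ (Set.univ : Set ℝ) := fun _ _ => Set.mem_univ _
  rcases le_total t₀ t₁ with h | h
  · have ha : a = t₀ := min_eq_left h
    have hb : b = t₁ := max_eq_right h
    have := ODE_solution_unique_of_mem_Icc_right (v := v) (s := fun _ => Set.univ)
      (f := f) (g := fun _ => 1 / lam) (a := a) (b := b) (fun s _ => hv s) hfc
      (fun s hs => (hf' s (Set.mem_Icc_of_Ico hs)).hasDerivWithinAt)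
      (fun s hs => Set.mem_univ _)
      hgc
      (fun s hs => (hg' s (Set.mem_Icc_of_Ico hs)).hasDerivWithinAt)
      (fun s hs => Set.mem_univ _)
      (by rw [ha]; exact hinit)
    have ht₁' : t₁ ∈ Set.Icc a b := by
      rw [ha, hb]; exact Set.right_mem_Icc.2 h
    exact this ht₁'
  · have ha : a = t₁ := min_eq_right h
    have hb : b = t₀ := max_eq_left h
    have := ODE_solution_unique_of_mem_Icc_left (v := v) (s := fun _ => Set.univ)
      (f := f) (g := fun _ => 1 / lam) (a := a) (b := b) (fun s _ => hv s) hfc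
      (fun s hs => (hf' s (Set.mem_Icc_of_Ioc hs)).hasDerivWithinAt)
      (fun s hs => Set.mem_univ _)
      hgc
      (fun s hs => (hg' s (Set.mem_Icc_of_Ioc hs)).hasDerivWithinAt)
      (fun s hs => Set.mem_univ _)
      (by rw [hb]; exact hinit)
    have ht₁' : t₁ ∈ Set.Icc a b := by
      rw [ha, hb]; exact Set.left_mem_Icc.2 h
    exact this ht₁'
end

section
/- Let x, x̂ : I → ℝ² be continuously differentiable curves on an interval I forming a Darboux pair with parameter λ ∈ ℝ \ {0} and the arc-length polarization m(t) = 1/|x'(t)|², where |x'(t)|² > 0 for all t. If |x̂(t₀)−x(t₀)|² = 1/λ at one point t₀ ∈ I, then m is also the arc-length polarization of x̂, i.e. |x̂'(t)|² = |x'(t)|² = 1/m(t) for all t ∈ I. -/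
/-- Component derivative helper. -/
lemma hasDerivAt_fst' {F : ℝ → ℝ × ℝ} {w : ℝ × ℝ} {t : ℝ} (h : HasDerivAt F w t) :
    HasDerivAt (fun s => (F s).1) w.1 t :=
  (hasFDerivAt_fst.comp_hasDerivAt t h :)

lemma hasDerivAt_snd' {F : ℝ → ℝ × ℝ} {w : ℝ × ℝ} {t : ℝ} (h : HasDerivAt F w t) :
    HasDerivAt (fun s => (F s).2) w.2 t :=
  (hasFDerivAt_snd.comp_hasDerivAt t h :)

/-- Gronwall-type vanishing lemma: a function with `|g'| ≤ K|g|` on `[a,b]` and `g a = 0`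
vanishes on `[a,b]`. -/
lemma gronwall_zero (g g' : ℝ → ℝ) (a b K : ℝ)
    (hg : ContinuousOn g (Set.Icc a b))
    (hd : ∀ t ∈ Set.Ico a b, HasDerivWithinAt g (g' t) (Set.Ici t) t)
    (hb : ∀ t ∈ Set.Ico a b, ‖g' t‖ ≤ K * ‖g t‖)
    (ha : g a = 0) : ∀ t ∈ Set.Icc a b, g t = 0 := by
  intro t ht
  have := norm_le_gronwallBound_of_norm_deriv_right_le (δ := 0) (ε := 0) hg hd
    (by simp [ha]) (by intro s hs; simpa using hb s hs) t ht
  rw [gronwallBound_ε0_δ0] at this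
  have := norm_nonneg (g t)
  have : ‖g t‖ = 0 := le_antisymm (by linarith) (norm_nonneg _)
  simpa using this

/-- For a C¹ Darboux pair on an interval, arc-length polarized for `x`,
if `|x̂−x|² = 1/λ` at one point, then `m` is also the arc-length polarization of `x̂`:
`|x̂'|² = |x'|² = 1/m` everywhere. -/
theorem darboux_simultaneous_arclength (I : Set ℝ) (hI : I.OrdConnected)
    (x xh x' xh' : ℝ → ℝ × ℝ) (lam : ℝ) (hlam : lam ≠ 0)
    (m : ℝ → ℝ)
    (hsp : ∀ t ∈ I, 0 < lsq (x' t))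
    (hm : ∀ t ∈ I, m t = 1 / lsq (x' t))
    (hx : ∀ t ∈ I, HasDerivAt x (x' t) t)
    (hxh : ∀ t ∈ I, HasDerivAt xh (xh' t) t)
    (hx'c : ContinuousOn x' I) (hxh'c : ContinuousOn xh' I)
    (hpair : DarbouxPair I x x' xh xh' lam m)
    (t₀ : ℝ) (ht₀ : t₀ ∈ I) (hinit : lsq (xh t₀ - x t₀) = 1 / lam) :
    ∀ t ∈ I, lsq (xh' t) = lsq (x' t) ∧ lsq (x' t) = 1 / m t := by
  set v : ℝ → ℝ × ℝ := fun s => xh s - x s with hv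
  set g : ℝ → ℝ := fun s => lam * lsq (v s) - 1 with hg
  set k : ℝ → ℝ := fun s => 2 * lam * ((x' s).1 * (v s).1 - (x' s).2 * (v s).2) with hk
  -- derivative of g on I
  have hgd : ∀ s ∈ I, HasDerivAt g (k s * g s) s := by
    intro s hs
    have hvd : HasDerivAt v (xh' s - x' s) s := (hxh s hs).sub (hx s hs)
    have h1 : HasDerivAt (fun u => (v u).1) (xh' s - x' s).1 s := hasDerivAt_fst' hvd
    have h2 : HasDerivAt (fun u => (v u).2) (xh' s - x' s).2 s := hasDerivAt_snd' hvd
    have hf : HasDerivAt g (lam * (2 * (v s).1 * (xh' s - x' s).1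
        - 2 * (v s).2 * (xh' s - x' s).2)) s := by
      have : HasDerivAt (fun u => lam * ((v u).1 ^ 2 - (v u).2 ^ 2) - 1)
          (lam * (2 * (v s).1 * (xh' s - x' s).1 - 2 * (v s).2 * (xh' s - x' s).2)) s := by
        have := (((h1.pow 2).sub (h2.pow 2)).const_mul lam).sub_const 1
        exact this.congr_deriv (by norm_num)
      simpa [hg, lsq] using this
    convert hf using 1
    -- algebraic identity from the Darboux relation
    have hD := hsp s hs
    have hDne : lsq (x' s) ≠ 0 := ne_of_gt hD
    have hpe := hpair s hs
    have hms : lam / m s = lam * lsq (x' s) := by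
      rw [hm s hs]; field_simp
    have hvs : xh s - x s = v s := rfl
    rw [hms, hvs] at hpe
    have e1 : (x' s).1 * (xh' s).1 + (x' s).2 * (xh' s).2
        = lam * lsq (x' s) * ((v s).1 * (v s).1 + (v s).2 * (v s).2) := by
      have := congrArg Prod.fst hpe
      simpa [sprod, Prod.smul_def, smul_eq_mul] using this
    have e2 : (x' s).1 * (xh' s).2 + (x' s).2 * (xh' s).1
        = lam * lsq (x' s) * ((v s).1 * (v s).2 + (v s).2 * (v s).1) := by
      have := congrArg Prod.snd hpe
      simpa [sprod, Prod.smul_def, smul_eq_mul] using this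
    simp only [lsq] at e1 e2 hDne
    have hDW : ((x' s).1 ^ 2 - (x' s).2 ^ 2)
          * ((xh' s).1 * (v s).1 - (xh' s).2 * (v s).2)
        = ((x' s).1 ^ 2 - (x' s).2 ^ 2)
          * (lam * ((v s).1 ^ 2 - (v s).2 ^ 2)
            * ((x' s).1 * (v s).1 - (x' s).2 * (v s).2)) := by
      linear_combination ((x' s).1 * (v s).1 + (x' s).2 * (v s).2) * e1
        - ((x' s).1 * (v s).2 + (x' s).2 * (v s).1) * e2
    have hW := mul_left_cancel₀ hDne hDW
    simp only [hk, hg, lsq, Prod.fst_sub, Prod.snd_sub]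
    linear_combination (-2 * lam) * hW
  -- continuity facts
  have hvc : ContinuousOn v I := fun s hs =>
    (((hxh s hs).continuousAt.sub (hx s hs).continuousAt).continuousWithinAt :)
  have hkc : ContinuousOn k I := by
    apply ContinuousOn.mul continuousOn_const
    exact ((hx'c.fst.mul hvc.fst).sub (hx'c.snd.mul hvc.snd))
  have hgc : ContinuousOn g I := by
    apply ContinuousOn.sub _ continuousOn_const
    apply ContinuousOn.mul continuousOn_const
    exact (hvc.fst.pow 2).sub (hvc.snd.pow 2)
  have hg0 : g t₀ = 0 := by
    show lam * lsq (xh t₀ - x t₀) - 1 = 0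
    rw [hinit]; field_simp; ring
  -- g vanishes on I
  have hgzero : ∀ t ∈ I, g t = 0 := by
    intro t ht
    rcases le_total t₀ t with hle | hle
    · have hsub : Set.Icc t₀ t ⊆ I := hI.out ht₀ ht
      obtain ⟨K, hK⟩ := (isCompact_Icc (a := t₀) (b := t)).exists_bound_of_continuousOn
        (hkc.mono hsub)
      refine gronwall_zero g (fun s => k s * g s) t₀ t K (hgc.mono hsub)
        (fun s hs => (hgd s (hsub (Set.mem_Icc_of_Ico hs))).hasDerivWithinAt)
        (fun s hs => ?_) hg0 t ⟨hle, le_refl t⟩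
      have := hK s (Set.mem_Icc_of_Ico hs)
      calc ‖k s * g s‖ = ‖k s‖ * ‖g s‖ := norm_mul _ _
        _ ≤ K * ‖g s‖ := by
            apply mul_le_mul_of_nonneg_right _ (norm_nonneg _)
            simpa using this
    · -- reflect: h s = g (2t₀ - s) on [t₀, 2t₀ - t]
      have hsub : Set.Icc t t₀ ⊆ I := hI.out ht ht₀
      obtain ⟨K, hK⟩ := (isCompact_Icc (a := t) (b := t₀)).exists_bound_of_continuousOn
        (hkc.mono hsub)
      have hmem : ∀ s ∈ Set.Icc t₀ (2 * t₀ - t), 2 * t₀ - s ∈ Set.Icc t t₀ := by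
        intro s hs; constructor <;> [skip; skip] <;> obtain ⟨h1, h2⟩ := hs <;> linarith
      have key : ∀ s ∈ Set.Icc t₀ (2 * t₀ - t), g (2 * t₀ - s) = 0 := by
        refine gronwall_zero (fun s => g (2 * t₀ - s))
          (fun s => -(k (2 * t₀ - s) * g (2 * t₀ - s))) t₀ (2 * t₀ - t) K ?_ ?_ ?_
          (by show g (2 * t₀ - t₀) = 0; rw [show 2 * t₀ - t₀ = t₀ by ring]; exact hg0)
        · exact (hgc.mono hsub).comp (by fun_prop) (fun s hs => hmem s hs)
        · intro s hs
          have hs' := hmem s (Set.mem_Icc_of_Ico hs)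
          have hd : HasDerivAt (fun u => g (2 * t₀ - u))
              (-(k (2 * t₀ - s) * g (2 * t₀ - s))) s := by
            have hl : HasDerivAt (fun u : ℝ => 2 * t₀ - u) (-1) s := by
              simpa using (hasDerivAt_id s).const_sub (2 * t₀)
            have := (hgd _ (hsub hs')).comp s hl
            exact this.congr_deriv (by ring)
          exact hd.hasDerivWithinAt
        · intro s hs
          have hs' := hmem s (Set.mem_Icc_of_Ico hs)
          have := hK _ hs'
          calc ‖-(k (2 * t₀ - s) * g (2 * t₀ - s))‖
              = ‖k (2 * t₀ - s)‖ * ‖g (2 * t₀ - s)‖ := by rw [norm_neg, norm_mul]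
            _ ≤ K * ‖g (2 * t₀ - s)‖ := by
                apply mul_le_mul_of_nonneg_right _ (norm_nonneg _)
                simpa using this
      have := key (2 * t₀ - t) ⟨by linarith, le_refl _⟩
      simpa using this
  -- conclude
  intro t ht
  have hD := hsp t ht
  have hDne : lsq (x' t) ≠ 0 := ne_of_gt hD
  have hgt := hgzero t ht
  have hf : lsq (v t) = 1 / lam := by
    simp only [hg] at hgt
    field_simp at hgt ⊢
    linarith
  constructor
  · -- lsq multiplicative applied to Darboux relation
    have hpe := hpair t ht
    have hms : lam / m t = lam * lsq (x' t) := by rw [hm t ht]; field_simp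
    rw [hms] at hpe
    have h1 := congrArg Prod.fst hpe
    have h2 := congrArg Prod.snd hpe
    have hvt : xh t - x t = v t := rfl
    rw [hvt] at h1 h2
    simp only [sprod, Prod.smul_def, smul_eq_mul] at h1 h2
    have hlm : lsq (x' t) * lsq (xh' t)
        = (lam * lsq (x' t)) ^ 2 * lsq (v t) ^ 2 := by
      simp only [lsq] at h1 h2 ⊢
      linear_combination ((x' t).1 * (xh' t).1 + (x' t).2 * (xh' t).2
          + lam * ((x' t).1 ^ 2 - (x' t).2 ^ 2)
            * ((v t).1 * (v t).1 + (v t).2 * (v t).2)) * h1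
        - ((x' t).1 * (xh' t).2 + (x' t).2 * (xh' t).1
          + lam * ((x' t).1 ^ 2 - (x' t).2 ^ 2)
            * ((v t).1 * (v t).2 + (v t).2 * (v t).1)) * h2
    rw [show lsq (v t) = 1 / lam from hf] at hlm
    have : lsq (x' t) * lsq (xh' t) = lsq (x' t) * lsq (x' t) := by
      rw [hlm]; field_simp
    exact mul_left_cancel₀ hDne this
  · rw [hm t ht]; field_simp
end

section
/- Let x, x̂ : I → ℝ² be differentiable curves forming a Darboux pair with parameter λ ∈ ℝ \ {0} and polarization m : I → ℝ \ {0}. Suppose x is spacelike, i.e. |x'(t)|² > 0 for all t, and x̂(t) ≠ x(t) for all t. Then x̂ has no singular points: x̂'(t) ≠ 0 for all t ∈ I. -/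
/-- A Darboux transformation of a spacelike curve has no singular points. -/
theorem darboux_no_singular (I : Set ℝ)
    (x xh x' xh' : ℝ → ℝ × ℝ) (lam : ℝ) (hlam : lam ≠ 0)
    (m : ℝ → ℝ) (hm : ∀ t ∈ I, m t ≠ 0)
    (hx : ∀ t ∈ I, HasDerivAt x (x' t) t)
    (hxh : ∀ t ∈ I, HasDerivAt xh (xh' t) t)
    (hpair : DarbouxPair I x x' xh xh' lam m)
    (hsp : ∀ t ∈ I, 0 < lsq (x' t))
    (hne : ∀ t ∈ I, xh t ≠ x t) :
    ∀ t ∈ I, xh' t ≠ 0 := by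
  intro t ht h0
  have heq := hpair t ht
  rw [h0] at heq
  have hL : sprod (x' t) 0 = (0 : ℝ × ℝ) := by simp [sprod]
  rw [hL] at heq
  have h1 := congrArg Prod.fst heq.symm
  simp only [sprod, Prod.smul_fst, Prod.fst_zero, smul_eq_mul] at h1
  have hd : xh t - x t ≠ 0 := sub_ne_zero.mpr (hne t ht)
  have hpos : 0 < (xh t - x t).1 * (xh t - x t).1 + (xh t - x t).2 * (xh t - x t).2 := by
    have h : (xh t - x t).1 ≠ 0 ∨ (xh t - x t).2 ≠ 0 := by
      by_contra h
      push_neg at h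
      exact hd (Prod.ext h.1 h.2)
    rcases h with h | h
    · nlinarith [mul_self_pos.mpr h, mul_self_nonneg (xh t - x t).2]
    · nlinarith [mul_self_pos.mpr h, mul_self_nonneg (xh t - x t).1]
  have hlm : lam / m t ≠ 0 := div_ne_zero hlam (hm t ht)
  rcases mul_eq_zero.mp h1 with h | h
  · exact hlm h
  · exact absurd h (ne_of_gt hpos)
end

section
/- Let r > 0 and c₁, c₂ ∈ ℝ, and let x(t) = (r·sec(t) + c₁, r·tan(t) + c₂) be a timelike circle in ℝ². Then 𝒫(x(t)) tends to the point (π/2 + arctan(c₁−c₂), π/2 − arctan(c₁−c₂)) as t → π/2 from the left; in particular the sum of the coordinates of the limit equals π and the difference of its coordinates lies in the open interval (−π, π), so the limit lies on the null infinity boundary of the Penrose diagram. -/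
open Real Filter

/-- The Penrose map `𝒫(x₁,x₂) = (arctan(x₁+x₂) + arctan(x₁−x₂), arctan(x₁+x₂) − arctan(x₁−x₂))`. -/
noncomputable def Penrose (v : ℝ × ℝ) : ℝ × ℝ :=
  (arctan (v.1 + v.2) + arctan (v.1 - v.2), arctan (v.1 + v.2) - arctan (v.1 - v.2))

lemma ev_mem : ∀ᶠ t in nhdsWithin (π / 2) (Set.Iio (π / 2)), t ∈ Set.Ioo (-(π/2)) (π/2) := by
  have h1 : ∀ᶠ t in nhdsWithin (π / 2) (Set.Iio (π / 2)), t ∈ Set.Ioi (-(π/2)) := by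
    apply eventually_nhdsWithin_of_eventually_nhds
    exact eventually_gt_nhds (by linarith [Real.pi_pos])
  have h2 : ∀ᶠ t in nhdsWithin (π / 2) (Set.Iio (π / 2)), t < π/2 :=
    eventually_mem_nhdsWithin
  filter_upwards [h1, h2] with t ht1 ht2 using ⟨ht1, ht2⟩

lemma cos_tendsto : Tendsto cos (nhdsWithin (π / 2) (Set.Iio (π / 2)))
    (nhdsWithin 0 (Set.Ioi 0)) := by
  apply tendsto_nhdsWithin_of_tendsto_nhds_of_eventually_within
  · simpa using (Real.continuous_cos.tendsto (π/2)).mono_left nhdsWithin_le_nhds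
  · filter_upwards [ev_mem] with t ht using cos_pos_of_mem_Ioo ht

lemma sum_atTop (r c₁ c₂ : ℝ) (hr : 0 < r) :
    Tendsto (fun t => r * (cos t)⁻¹ + c₁ + (r * tan t + c₂))
      (nhdsWithin (π / 2) (Set.Iio (π / 2))) atTop := by
  have h1 : Tendsto (fun t => (cos t)⁻¹) (nhdsWithin (π / 2) (Set.Iio (π / 2))) atTop :=
    tendsto_inv_nhdsGT_zero.comp cos_tendsto
  have h2 : Tendsto (fun t => r + r * sin t) (nhdsWithin (π / 2) (Set.Iio (π / 2)))
      (nhds (r + r)) := by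
    have : Tendsto (fun t => r + r * sin t) (nhds (π/2)) (nhds (r + r * sin (π/2))) := by
      exact (tendsto_const_nhds.add (tendsto_const_nhds.mul (Real.continuous_sin.tendsto _)))
    simpa using this.mono_left nhdsWithin_le_nhds
  have key : Tendsto (fun t => (r + r * sin t) * (cos t)⁻¹)
      (nhdsWithin (π / 2) (Set.Iio (π / 2))) atTop :=
    Tendsto.pos_mul_atTop (by linarith) h2 h1
  have := (key.atTop_add (tendsto_const_nhds (x := c₁ + c₂)))
  apply this.congr'
  filter_upwards [ev_mem] with t ht
  have hc : cos t ≠ 0 := (cos_pos_of_mem_Ioo ht).ne'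
  rw [Real.tan_eq_sin_div_cos]
  field_simp
  ring

lemma diff_tendsto (r c₁ c₂ : ℝ) :
    Tendsto (fun t => r * (cos t)⁻¹ + c₁ - (r * tan t + c₂))
      (nhdsWithin (π / 2) (Set.Iio (π / 2))) (nhds (c₁ - c₂)) := by
  have h : Tendsto (fun t => r * (cos t / (1 + sin t)) + (c₁ - c₂))
      (nhdsWithin (π / 2) (Set.Iio (π / 2))) (nhds (c₁ - c₂)) := by
    have : Tendsto (fun t => r * (cos t / (1 + sin t)) + (c₁ - c₂)) (nhds (π/2))
        (nhds (r * (cos (π/2) / (1 + sin (π/2))) + (c₁ - c₂))) := by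
      apply Tendsto.add _ tendsto_const_nhds
      apply Tendsto.mul tendsto_const_nhds
      apply Tendsto.div (Real.continuous_cos.tendsto _)
        (tendsto_const_nhds.add (Real.continuous_sin.tendsto _))
      norm_num
    simpa using this.mono_left nhdsWithin_le_nhds
  apply h.congr'
  filter_upwards [ev_mem] with t ht
  have hc : cos t ≠ 0 := (cos_pos_of_mem_Ioo ht).ne'
  have hcp : 0 < cos t := cos_pos_of_mem_Ioo ht
  have hp := Real.sin_sq_add_cos_sq t
  have hs' : (0:ℝ) < 1 + sin t := by nlinarith [Real.sin_le_one t, Real.neg_one_le_sin t]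
  rw [Real.tan_eq_sin_div_cos]
  field_simp
  linear_combination r * hp

/-- A timelike circle `x(t) = (r sec t + c₁, r tan t + c₂)` blows up, in the Penrose
diagram, to the point `(π/2 + arctan(c₁−c₂), π/2 − arctan(c₁−c₂))` as `t → π/2⁻`;
the coordinates of the limit sum to `π` and their difference lies in `(−π, π)`,
so the limit is at the null infinity. -/
theorem timelike_circle_null_infinity (r c₁ c₂ : ℝ) (hr : 0 < r)
    (x : ℝ → ℝ × ℝ) (hx : ∀ t, x t = (r * (cos t)⁻¹ + c₁, r * tan t + c₂)) :
    Tendsto (fun t => Penrose (x t)) (nhdsWithin (π / 2) (Set.Iio (π / 2)))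
      (nhds (π / 2 + arctan (c₁ - c₂), π / 2 - arctan (c₁ - c₂))) ∧
    (π / 2 + arctan (c₁ - c₂)) + (π / 2 - arctan (c₁ - c₂)) = π ∧
    (π / 2 + arctan (c₁ - c₂)) - (π / 2 - arctan (c₁ - c₂)) ∈ Set.Ioo (-π) π := by
  have hA : Tendsto (fun t => arctan (r * (cos t)⁻¹ + c₁ + (r * tan t + c₂)))
      (nhdsWithin (π / 2) (Set.Iio (π / 2))) (nhds (π/2)) :=
    (tendsto_arctan_atTop.mono_right nhdsWithin_le_nhds).comp (sum_atTop r c₁ c₂ hr)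
  have hB : Tendsto (fun t => arctan (r * (cos t)⁻¹ + c₁ - (r * tan t + c₂)))
      (nhdsWithin (π / 2) (Set.Iio (π / 2))) (nhds (arctan (c₁ - c₂))) :=
    (Real.continuous_arctan.tendsto _).comp (diff_tendsto r c₁ c₂)
  refine ⟨?_, by ring, ?_⟩
  · have : Tendsto (fun t => Penrose (x t)) (nhdsWithin (π / 2) (Set.Iio (π / 2)))
        (nhds (π/2 + arctan (c₁ - c₂), π/2 - arctan (c₁ - c₂))) := by
      have := (hA.add hB).prodMk_nhds (hA.sub hB)
      apply this.congr
      intro t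
      simp [Penrose, hx t]
    exact this
  · have h := Real.arctan_mem_Ioo (c₁ - c₂)
    have hπ : 0 < π := Real.pi_pos
    constructor <;> [skip; skip] <;>
      · have := h.1; have := h.2; simp only [Set.mem_Ioo] at *; linarith
end

section
/- Let r > 0 and c₁, c₂ ∈ ℝ, and let x(t) = (r·tan(t) + c₁, r·sec(t) + c₂) be a spacelike circle in ℝ². Then 𝒫(x(t)) tends to the point (π/2 + arctan(c₁−c₂), π/2 − arctan(c₁−c₂)) as t → π/2 from the left; in particular the sum of the coordinates of the limit equals π and the difference of its coordinates lies in the open interval (−π, π), so the limit lies on the null infinity boundary of the Penrose diagram. -/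
open Real Filter

/-- A spacelike circle `x(t) = (r tan t + c₁, r sec t + c₂)` blows up, in the Penrose
diagram, to the point `(π/2 + arctan(c₁−c₂), π/2 − arctan(c₁−c₂))` as `t → π/2⁻`;
the coordinates of the limit sum to `π` and their difference lies in `(−π, π)`,
so the limit is at the null infinity. -/
theorem spacelike_circle_null_infinity (r c₁ c₂ : ℝ) (hr : 0 < r)
    (x : ℝ → ℝ × ℝ) (hx : ∀ t, x t = (r * tan t + c₁, r * (cos t)⁻¹ + c₂)) :
    Tendsto (fun t => Penrose (x t)) (nhdsWithin (π / 2) (Set.Iio (π / 2)))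
      (nhds (π / 2 + arctan (c₁ - c₂), π / 2 - arctan (c₁ - c₂))) ∧
    (π / 2 + arctan (c₁ - c₂)) + (π / 2 - arctan (c₁ - c₂)) = π ∧
    (π / 2 + arctan (c₁ - c₂)) - (π / 2 - arctan (c₁ - c₂)) ∈ Set.Ioo (-π) π := by
  have hpi := Real.pi_pos
  have hmem : Set.Ioo 0 (π / 2) ∈ nhdsWithin (π / 2) (Set.Iio (π / 2)) :=
    Ioo_mem_nhdsLT_of_mem ⟨by linarith, le_refl _⟩
  -- cos tends to 0 from above
  have hcos : Tendsto cos (nhdsWithin (π / 2) (Set.Iio (π / 2))) (nhdsWithin 0 (Set.Ioi 0)) := by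
    rw [tendsto_nhdsWithin_iff]
    constructor
    · apply tendsto_nhdsWithin_of_tendsto_nhds
      simpa using Real.continuous_cos.tendsto (π / 2)
    · filter_upwards [hmem] with t ht
      exact Real.cos_pos_of_mem_Ioo ⟨by linarith [ht.1], ht.2⟩
  have hsec : Tendsto (fun t => (cos t)⁻¹) (nhdsWithin (π / 2) (Set.Iio (π / 2))) atTop :=
    hcos.inv_tendsto_nhdsGT_zero
  have htan : Tendsto tan (nhdsWithin (π / 2) (Set.Iio (π / 2))) atTop :=
    Real.tendsto_tan_pi_div_two
  -- first argument tends to +∞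
  have hsum : Tendsto (fun t => r * (tan t + (cos t)⁻¹) + (c₁ + c₂))
      (nhdsWithin (π / 2) (Set.Iio (π / 2))) atTop :=
    tendsto_atTop_add_const_right _ _ ((Filter.Tendsto.atTop_add_atTop htan hsec).const_mul_atTop hr)
  have harctan1 : Tendsto (fun t => arctan (r * (tan t + (cos t)⁻¹) + (c₁ + c₂)))
      (nhdsWithin (π / 2) (Set.Iio (π / 2))) (nhds (π / 2)) :=
    (Real.tendsto_arctan_atTop.mono_right nhdsWithin_le_nhds).comp hsum
  -- tan t - sec t tends to 0
  have hdiff0 : Tendsto (fun t => tan t - (cos t)⁻¹)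
      (nhdsWithin (π / 2) (Set.Iio (π / 2))) (nhds 0) := by
    have hg : Tendsto (fun t => -cos t / (1 + sin t)) (nhds (π / 2)) (nhds 0) := by
      have h1 : Tendsto (fun t => -cos t) (nhds (π / 2)) (nhds 0) := by
        simpa using (Real.continuous_cos.tendsto (π / 2)).neg
      have h2 : Tendsto (fun t => 1 + sin t) (nhds (π / 2)) (nhds 2) := by
        have hc : Continuous fun t : ℝ => 1 + sin t := by continuity
        have := hc.tendsto (π / 2)
        norm_num [Real.sin_pi_div_two] at this
        exact this
      simpa [Pi.div_def] using h1.div h2 two_ne_zero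
    apply Tendsto.congr' _ (hg.mono_left nhdsWithin_le_nhds)
    filter_upwards [hmem] with t ht
    have hcpos : 0 < cos t := Real.cos_pos_of_mem_Ioo ⟨by linarith [ht.1], ht.2⟩
    have hc : cos t ≠ 0 := ne_of_gt hcpos
    have hs : 1 + sin t ≠ 0 := by
      have := Real.neg_one_le_sin t
      have : -1 < sin t := by
        rcases lt_or_eq_of_le this with h | h
        · exact h
        · exfalso
          have := Real.sin_sq_add_cos_sq t
          rw [← h] at this
          nlinarith
      linarith
    rw [Real.tan_eq_sin_div_cos]
    field_simp
    nlinarith [Real.sin_sq_add_cos_sq t]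
  have harctan2 : Tendsto (fun t => arctan (r * (tan t - (cos t)⁻¹) + (c₁ - c₂)))
      (nhdsWithin (π / 2) (Set.Iio (π / 2))) (nhds (arctan (c₁ - c₂))) := by
    have : Tendsto (fun t => r * (tan t - (cos t)⁻¹) + (c₁ - c₂))
        (nhdsWithin (π / 2) (Set.Iio (π / 2))) (nhds (c₁ - c₂)) := by
      have := (hdiff0.const_mul r).add_const (c₁ - c₂)
      simpa using this
    exact (Real.continuous_arctan.tendsto _).comp this
  refine ⟨?_, by ring, ?_⟩
  · have key : (fun t => Penrose (x t)) = fun t =>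
        (arctan (r * (tan t + (cos t)⁻¹) + (c₁ + c₂)) +
          arctan (r * (tan t - (cos t)⁻¹) + (c₁ - c₂)),
         arctan (r * (tan t + (cos t)⁻¹) + (c₁ + c₂)) -
          arctan (r * (tan t - (cos t)⁻¹) + (c₁ - c₂))) := by
      funext t
      simp only [Penrose, hx]
      have e1 : r * tan t + c₁ + (r * (cos t)⁻¹ + c₂) = r * (tan t + (cos t)⁻¹) + (c₁ + c₂) := by
        ring
      have e2 : r * tan t + c₁ - (r * (cos t)⁻¹ + c₂) = r * (tan t - (cos t)⁻¹) + (c₁ - c₂) := by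
        ring
      rw [e1, e2]
    rw [key]
    exact (harctan1.add harctan2).prodMk_nhds (harctan1.sub harctan2)
  · constructor <;>
      [linarith [Real.neg_pi_div_two_lt_arctan (c₁ - c₂)];
       linarith [Real.arctan_lt_pi_div_two (c₁ - c₂)]]
end

section
/- Let c₁, c₂ ∈ ℝ and let x(t) = (t + c₁, t + c₂) be a lightlike line in ℝ². Then 𝒫(x(t)) tends to the point (π/2 + arctan(c₁−c₂), π/2 − arctan(c₁−c₂)) as t → ∞; in particular the sum of the coordinates of the limit equals π and the difference of its coordinates lies in the open interval (−π, π), so the limit lies on the null infinity boundary of the Penrose diagram. -/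
open Real Filter

/-- A lightlike line `x(t) = (t + c₁, t + c₂)` blows up, in the Penrose diagram, to
the point `(π/2 + arctan(c₁−c₂), π/2 − arctan(c₁−c₂))` as `t → ∞`;
the coordinates of the limit sum to `π` and their difference lies in `(−π, π)`,
so the limit is at the null infinity. -/
theorem lightlike_line_null_infinity (c₁ c₂ : ℝ)
    (x : ℝ → ℝ × ℝ) (hx : ∀ t, x t = (t + c₁, t + c₂)) :
    Tendsto (fun t => Penrose (x t)) atTop
      (nhds (π / 2 + arctan (c₁ - c₂), π / 2 - arctan (c₁ - c₂))) ∧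
    (π / 2 + arctan (c₁ - c₂)) + (π / 2 - arctan (c₁ - c₂)) = π ∧
    (π / 2 + arctan (c₁ - c₂)) - (π / 2 - arctan (c₁ - c₂)) ∈ Set.Ioo (-π) π := by
  have harctan : Tendsto (fun t : ℝ => arctan (t + c₁ + (t + c₂))) atTop (nhds (π / 2)) := by
    apply (tendsto_nhds_of_tendsto_nhdsWithin tendsto_arctan_atTop).comp
    have : Tendsto (fun t : ℝ => 2 * t + (c₁ + c₂)) atTop atTop :=
      tendsto_atTop_add_const_right _ _ (tendsto_id.const_mul_atTop two_pos)
    refine this.congr fun t => by ring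
  have hdiff : (fun t : ℝ => t + c₁ - (t + c₂)) = fun _ => c₁ - c₂ := by
    funext t; ring
  refine ⟨?_, by ring, ?_⟩
  · have : (fun t => Penrose (x t)) =
        fun t => (arctan (t + c₁ + (t + c₂)) + arctan (c₁ - c₂),
                  arctan (t + c₁ + (t + c₂)) - arctan (c₁ - c₂)) := by
      funext t; have : t + c₁ - (t + c₂) = c₁ - c₂ := by ring
      simp only [Penrose, hx t, this]
    rw [this]
    exact (harctan.add_const _).prodMk_nhds (harctan.sub_const _)
  · have h := arctan_mem_Ioo (c₁ - c₂)
    have hlt : arctan (c₁ - c₂) < π / 2 := h.2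
    have hgt : -(π / 2) < arctan (c₁ - c₂) := h.1
    constructor <;> [linarith; linarith]
end

section
/- The Penrose map 𝒫 is conformal for the Lorentz metric: for every point p = (p₁,p₂) ∈ ℝ² and all tangent vectors w₁, w₂ ∈ ℝ², the total derivative D𝒫(p) satisfies ⟨D𝒫(p)(w₁), D𝒫(p)(w₂)⟩ = (4 / ((1+(p₁+p₂)²)(1+(p₁−p₂)²))) · ⟨w₁, w₂⟩, and the conformal factor 4/((1+(p₁+p₂)²)(1+(p₁−p₂)²)) is strictly positive. -/
open Real

/-- The Penrose map is conformal for the Lorentz metric, with conformal factor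
`4 / ((1+(p₁+p₂)²)(1+(p₁−p₂)²)) > 0`. -/
theorem penrose_conformal (p : ℝ × ℝ) (w₁ w₂ : ℝ × ℝ) :
    lin (fderiv ℝ Penrose p w₁) (fderiv ℝ Penrose p w₂) =
      (4 / ((1 + (p.1 + p.2) ^ 2) * (1 + (p.1 - p.2) ^ 2))) * lin w₁ w₂ ∧
    0 < 4 / ((1 + (p.1 + p.2) ^ 2) * (1 + (p.1 - p.2) ^ 2)) := by
  have hs : HasFDerivAt (fun v : ℝ × ℝ => v.1 + v.2)
      (ContinuousLinearMap.fst ℝ ℝ ℝ + ContinuousLinearMap.snd ℝ ℝ ℝ) p :=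
    hasFDerivAt_fst.add hasFDerivAt_snd
  have hd : HasFDerivAt (fun v : ℝ × ℝ => v.1 - v.2)
      (ContinuousLinearMap.fst ℝ ℝ ℝ - ContinuousLinearMap.snd ℝ ℝ ℝ) p :=
    hasFDerivAt_fst.sub hasFDerivAt_snd
  have h1 : HasFDerivAt (fun v : ℝ × ℝ => arctan (v.1 + v.2))
      ((1 / (1 + (p.1 + p.2) ^ 2)) •
        (ContinuousLinearMap.fst ℝ ℝ ℝ + ContinuousLinearMap.snd ℝ ℝ ℝ)) p :=
    (Real.hasDerivAt_arctan (p.1 + p.2)).comp_hasFDerivAt (h₂ := arctan) p hs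
  have h2 : HasFDerivAt (fun v : ℝ × ℝ => arctan (v.1 - v.2))
      ((1 / (1 + (p.1 - p.2) ^ 2)) •
        (ContinuousLinearMap.fst ℝ ℝ ℝ - ContinuousLinearMap.snd ℝ ℝ ℝ)) p :=
    (Real.hasDerivAt_arctan (p.1 - p.2)).comp_hasFDerivAt (h₂ := arctan) p hd
  have hP0 := HasFDerivAt.prodMk (h1.add h2) (h1.sub h2)
  have hP : HasFDerivAt Penrose _ p := hP0
  have ha : (0:ℝ) < 1 + (p.1 + p.2) ^ 2 := by positivity
  have hb : (0:ℝ) < 1 + (p.1 - p.2) ^ 2 := by positivity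
  constructor
  · rw [hP.fderiv]
    simp only [lin, ContinuousLinearMap.prod_apply, ContinuousLinearMap.add_apply,
      ContinuousLinearMap.sub_apply, ContinuousLinearMap.smul_apply,
      ContinuousLinearMap.coe_fst', ContinuousLinearMap.coe_snd', smul_eq_mul]
    field_simp
    ring
  · positivity
end

section
/- Let x = (f, g) : I → ℝ² be a differentiable curve with f(t)² − g(t)² ≠ 0 for all t ∈ I. Then for all t ∈ I, the Lorentz squared norm of the derivative of 𝒫 ∘ σ ∘ x satisfies |(𝒫(σ(x(t))))'|² = 4(f'(t)² − g'(t)²) / Θ(t), where Θ(t) = (1+(f(t)+g(t))²)(1+(f(t)−g(t))²) and |(u,v)|² = u² − v². -/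
open Real

/-- The Lorentz inversion `σ(v) = v / |v|²`. -/
noncomputable def linv (v : ℝ × ℝ) : ℝ × ℝ := (lsq v)⁻¹ • v

/-- For a differentiable curve `x = (f,g)` with `f² − g² ≠ 0`, the Lorentz squared
speed of `𝒫 ∘ σ ∘ x` is `|(𝒫(σ(x)))'|² = 4(f'² − g'²)/Θ`, where
`Θ = (1+(f+g)²)(1+(f−g)²)`. -/
theorem penrose_inversion_curve_speed (I : Set ℝ) (x x' : ℝ → ℝ × ℝ)
    (hx : ∀ t ∈ I, HasDerivAt x (x' t) t)
    (hne : ∀ t ∈ I, (x t).1 ^ 2 - (x t).2 ^ 2 ≠ 0) :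
    ∀ t ∈ I, ∃ d : ℝ × ℝ, HasDerivAt (fun s => Penrose (linv (x s))) d t ∧
      lsq d = 4 * ((x' t).1 ^ 2 - (x' t).2 ^ 2) /
        ((1 + ((x t).1 + (x t).2) ^ 2) * (1 + ((x t).1 - (x t).2) ^ 2)) := by
  intro t ht
  have hxd := hx t ht
  have hne0 := hne t ht
  -- component derivatives
  have hf : HasDerivAt (fun s => (x s).1) (x' t).1 t :=
    (ContinuousLinearMap.fst ℝ ℝ ℝ).hasFDerivAt.comp_hasDerivAt t hxd
  have hg : HasDerivAt (fun s => (x s).2) (x' t).2 t :=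
    (ContinuousLinearMap.snd ℝ ℝ ℝ).hasFDerivAt.comp_hasDerivAt t hxd
  set u : ℝ → ℝ := fun s => (x s).1 + (x s).2 with hudef
  set w : ℝ → ℝ := fun s => (x s).1 - (x s).2 with hwdef
  have hu : HasDerivAt u ((x' t).1 + (x' t).2) t := hf.add hg
  have hw : HasDerivAt w ((x' t).1 - (x' t).2) t := hf.sub hg
  have hfac : (x t).1 ^ 2 - (x t).2 ^ 2 = u t * w t := by simp [hudef, hwdef]; ring
  have hune : u t ≠ 0 := fun h => hne0 (by rw [hfac, h, zero_mul])
  have hwne : w t ≠ 0 := fun h => hne0 (by rw [hfac, h, mul_zero])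
  -- derivative of the nice version
  have hU : HasDerivAt (fun s => arctan (u s)⁻¹)
      (1 / (1 + ((u t)⁻¹) ^ 2) * (-((x' t).1 + (x' t).2) / u t ^ 2)) t :=
    (hu.inv hune).arctan
  have hW : HasDerivAt (fun s => arctan (w s)⁻¹)
      (1 / (1 + ((w t)⁻¹) ^ 2) * (-((x' t).1 - (x' t).2) / w t ^ 2)) t :=
    (hw.inv hwne).arctan
  set U : ℝ := 1 / (1 + ((u t)⁻¹) ^ 2) * (-((x' t).1 + (x' t).2) / u t ^ 2)
  set W : ℝ := 1 / (1 + ((w t)⁻¹) ^ 2) * (-((x' t).1 - (x' t).2) / w t ^ 2)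
  have hG : HasDerivAt (fun s => (arctan (w s)⁻¹ + arctan (u s)⁻¹,
      arctan (w s)⁻¹ - arctan (u s)⁻¹)) (W + U, W - U) t :=
    (hW.add hU).prodMk (hW.sub hU)
  -- eventual equality
  have hcx : ContinuousAt x t := hxd.continuousAt
  have hucont : ContinuousAt u t := hcx.fst.add hcx.snd
  have hwcont : ContinuousAt w t := hcx.fst.sub hcx.snd
  have hev : ∀ᶠ s in nhds t, Penrose (linv (x s)) =
      (arctan (w s)⁻¹ + arctan (u s)⁻¹, arctan (w s)⁻¹ - arctan (u s)⁻¹) := by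
    filter_upwards [hucont.eventually_ne hune, hwcont.eventually_ne hwne] with s hsu hsw
    have hls : lsq (x s) ≠ 0 := by
      have : lsq (x s) = u s * w s := by simp [lsq, hudef, hwdef]; ring
      rw [this]; exact mul_ne_zero hsu hsw
    have hls' : (x s).1 ^ 2 - (x s).2 ^ 2 ≠ 0 := hls
    have h1 : (lsq (x s))⁻¹ * (x s).1 + (lsq (x s))⁻¹ * (x s).2 = (w s)⁻¹ := by
      have hsw' : (x s).1 - (x s).2 ≠ 0 := hsw
      simp only [hwdef, lsq]; field_simp; ring
    have h2 : (lsq (x s))⁻¹ * (x s).1 - (lsq (x s))⁻¹ * (x s).2 = (u s)⁻¹ := by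
      have hsu' : (x s).1 + (x s).2 ≠ 0 := hsu
      simp only [hudef, lsq]; field_simp; ring
    simp [Penrose, linv, h1, h2]
  refine ⟨(W + U, W - U), hG.congr_of_eventuallyEq hev, ?_⟩
  have hden1 : (1 + u t ^ 2) ≠ 0 := by positivity
  have hden2 : (1 + w t ^ 2) ≠ 0 := by positivity
  have key : lsq (W + U, W - U) = 4 * W * U := by simp [lsq]; ring
  rw [key]
  have hx1 : (x t).1 + (x t).2 = u t := rfl
  have hx2 : (x t).1 - (x t).2 = w t := rfl
  rw [hx1, hx2]
  simp only [U, W]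
  field_simp
  ring
end

section
/- Let x = (f, g) : I → ℝ² be a differentiable curve, let t* be in the closure of I, and suppose f(t)² − g(t)² ≠ 0 for all t in I. If |x'(t)|² = f'(t)² − g'(t)² tends to 0 as t → t*, then the Lorentz squared norm |(𝒫(σ(x(t))))'|² of the derivative of 𝒫 ∘ σ ∘ x also tends to 0 as t → t*. -/
open Real Filter

/-- If the Lorentz squared speed `|x'|²` of a differentiable curve `x = (f,g)` with
`f² − g² ≠ 0` tends to `0` as `t → t*`, then so does `|(𝒫(σ(x)))'|²`. -/
theorem penrose_inversion_speed_to_zero (I : Set ℝ) (x x' : ℝ → ℝ × ℝ)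
    (hx : ∀ t ∈ I, HasDerivAt x (x' t) t)
    (hne : ∀ t ∈ I, (x t).1 ^ 2 - (x t).2 ^ 2 ≠ 0)
    (tstar : ℝ) (htstar : tstar ∈ closure I)
    (hlim : Tendsto (fun t => (x' t).1 ^ 2 - (x' t).2 ^ 2)
      (nhdsWithin tstar I) (nhds 0)) :
    Tendsto (fun t => lsq (deriv (fun s => Penrose (linv (x s))) t))
      (nhdsWithin tstar I) (nhds 0) := by
  have key : ∀ t ∈ I, |lsq (deriv (fun s => Penrose (linv (x s))) t)|
      ≤ 4 * |(x' t).1 ^ 2 - (x' t).2 ^ 2| := by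
    intro t ht
    set p := (x t).1 with hp
    set q := (x t).2 with hq
    set d1 := (x' t).1 with hd1
    set d2 := (x' t).2 with hd2
    have h0 : p ^ 2 - q ^ 2 ≠ 0 := hne t ht
    have hf : HasDerivAt (fun s => (x s).1) d1 t := (hx t ht).fst
    have hg : HasDerivAt (fun s => (x s).2) d2 t := (hx t ht).snd
    have hL : HasDerivAt (fun s => (x s).1 ^ 2 - (x s).2 ^ 2)
        (2 * p * d1 - 2 * q * d2) t := by
      have h : HasDerivAt (fun s => (x s).1 ^ 2 - (x s).2 ^ 2) _ t := (hf.pow 2).sub (hg.pow 2)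
      convert h using 1
      simp [hp, hq]
    have hc : HasDerivAt (fun s => ((x s).1 ^ 2 - (x s).2 ^ 2)⁻¹)
        (-(2 * p * d1 - 2 * q * d2) / (p ^ 2 - q ^ 2) ^ 2) t := hL.inv h0
    set c := (p ^ 2 - q ^ 2)⁻¹ with hcdef
    set cd := -(2 * p * d1 - 2 * q * d2) / (p ^ 2 - q ^ 2) ^ 2 with hcd
    have ha : HasDerivAt
        (fun s => ((x s).1 ^ 2 - (x s).2 ^ 2)⁻¹ * (x s).1
          + ((x s).1 ^ 2 - (x s).2 ^ 2)⁻¹ * (x s).2)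
        ((cd * p + c * d1) + (cd * q + c * d2)) t := (hc.mul hf).add (hc.mul hg)
    have hb : HasDerivAt
        (fun s => ((x s).1 ^ 2 - (x s).2 ^ 2)⁻¹ * (x s).1
          - ((x s).1 ^ 2 - (x s).2 ^ 2)⁻¹ * (x s).2)
        ((cd * p + c * d1) - (cd * q + c * d2)) t := (hc.mul hf).sub (hc.mul hg)
    have hA := ha.arctan
    have hB := hb.arctan
    set A := 1 / (1 + (c * p + c * q) ^ 2) * ((cd * p + c * d1) + (cd * q + c * d2))
      with hAdef
    set B := 1 / (1 + (c * p - c * q) ^ 2) * ((cd * p + c * d1) - (cd * q + c * d2))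
      with hBdef
    have hP : HasDerivAt (fun s => Penrose (linv (x s))) (A + B, A - B) t := by
      have h := (hA.add hB).prodMk (hA.sub hB)
      convert h using 2 <;> ext s <;>
        simp [Penrose, linv, lsq, Prod.smul_fst, Prod.smul_snd, smul_eq_mul]
    rw [hP.deriv]
    -- nonvanishing facts
    have hu : p + q ≠ 0 := by
      intro h
      apply h0
      have : p = -q := by linarith
      rw [this]; ring
    have hv : p - q ≠ 0 := by
      intro h
      apply h0
      have : p = q := by linarith
      rw [this]; ring
    have hQu : (0:ℝ) < (p + q) ^ 2 + 1 := by positivity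
    have hQv : (0:ℝ) < (p - q) ^ 2 + 1 := by positivity
    have hden1 : (1:ℝ) + (c * p + c * q) ^ 2 ≠ 0 := by positivity
    have hden2 : (1:ℝ) + (c * p - c * q) ^ 2 ≠ 0 := by positivity
    have hID : lsq (A + B, A - B)
        = 4 * (d1 ^ 2 - d2 ^ 2) / (((p + q) ^ 2 + 1) * ((p - q) ^ 2 + 1)) := by
      simp only [lsq, hAdef, hBdef, hcd, hcdef]
      field_simp
      ring
    rw [hID, abs_div]
    have hQ1 : (1:ℝ) ≤ ((p + q) ^ 2 + 1) * ((p - q) ^ 2 + 1) := by nlinarith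
    have habs : |((p + q) ^ 2 + 1) * ((p - q) ^ 2 + 1)|
        = ((p + q) ^ 2 + 1) * ((p - q) ^ 2 + 1) := abs_of_pos (by positivity)
    rw [habs]
    calc |4 * (d1 ^ 2 - d2 ^ 2)| / (((p + q) ^ 2 + 1) * ((p - q) ^ 2 + 1))
        ≤ |4 * (d1 ^ 2 - d2 ^ 2)| := div_le_self (abs_nonneg _) hQ1
      _ = 4 * |d1 ^ 2 - d2 ^ 2| := by rw [abs_mul]; norm_num
  refine squeeze_zero_norm'
      (a := fun t => 4 * |(x' t).1 ^ 2 - (x' t).2 ^ 2|) ?_ ?_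
  · filter_upwards [self_mem_nhdsWithin] with t ht
    simpa [Real.norm_eq_abs] using key t ht
  · have h := hlim.abs.const_mul (4 : ℝ)
    simpa using h
end

section
/- Let x̂ = (x̂₁, x̂₂) : I → ℝ² be a differentiable curve with x̂₁(t)² − x̂₂(t)² ≠ 0 for all t, let t* be in the closure of I, and suppose that: the Lorentz squared speed |x̂'(t)|² = x̂₁'(t)² − x̂₂'(t)² is bounded as t → t*, x̂₁(t) + x̂₂(t) tends to +∞ as t → t*, and x̂₁(t) − x̂₂(t) tends to a finite limit L ∈ ℝ as t → t*. Then the Lorentz squared norm |(𝒫(σ(x̂(t))))'|² of the derivative of 𝒫 ∘ σ ∘ x̂, which equals 4|x̂'(t)|² / ((1+(x̂₁(t)+x̂₂(t))²)(1+(x̂₁(t)−x̂₂(t))²)), tends to 0 as t → t*. -/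
open Real Filter

/-- Auxiliary: pointwise derivative formula for the Penrose-inverted curve. -/
theorem penrose_deriv_key (I : Set ℝ) (xh xh' : ℝ → ℝ × ℝ)
    (hxh : ∀ t ∈ I, HasDerivAt xh (xh' t) t)
    (hne : ∀ t ∈ I, (xh t).1 ^ 2 - (xh t).2 ^ 2 ≠ 0) :
    ∀ t ∈ I, lsq (deriv (fun s => Penrose (linv (xh s))) t) =
      4 * lsq (xh' t) /
        ((1 + ((xh t).1 + (xh t).2) ^ 2) * (1 + ((xh t).1 - (xh t).2) ^ 2)) := by
  intro t ht
  have ha := hxh t ht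
  have hne' := hne t ht
  have h1 : HasDerivAt (fun s => (xh s).1) (xh' t).1 t :=
    (ContinuousLinearMap.fst ℝ ℝ ℝ).hasFDerivAt.comp_hasDerivAt t ha
  have h2 : HasDerivAt (fun s => (xh s).2) (xh' t).2 t :=
    (ContinuousLinearMap.snd ℝ ℝ ℝ).hasFDerivAt.comp_hasDerivAt t ha
  have hq : HasDerivAt (fun s => (xh s).1 ^ 2 - (xh s).2 ^ 2)
      ((2:ℕ) * (xh t).1 ^ (2-1) * (xh' t).1 - (2:ℕ) * (xh t).2 ^ (2-1) * (xh' t).2) t :=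
    (h1.pow 2).sub (h2.pow 2)
  have hinv := hq.inv hne'
  have hF := ((hinv.mul h1).add (hinv.mul h2)).arctan
  have hG := ((hinv.mul h1).sub (hinv.mul h2)).arctan
  have hP := (hF.add hG).prodMk (hF.sub hG)
  have heq : (fun s => Penrose (linv (xh s))) = (fun s =>
      (arctan ((((xh s).1 ^ 2 - (xh s).2 ^ 2)⁻¹ * (xh s).1) + (((xh s).1 ^ 2 - (xh s).2 ^ 2)⁻¹ * (xh s).2)) +
       arctan ((((xh s).1 ^ 2 - (xh s).2 ^ 2)⁻¹ * (xh s).1) - (((xh s).1 ^ 2 - (xh s).2 ^ 2)⁻¹ * (xh s).2)),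
       arctan ((((xh s).1 ^ 2 - (xh s).2 ^ 2)⁻¹ * (xh s).1) + (((xh s).1 ^ 2 - (xh s).2 ^ 2)⁻¹ * (xh s).2)) -
       arctan ((((xh s).1 ^ 2 - (xh s).2 ^ 2)⁻¹ * (xh s).1) - (((xh s).1 ^ 2 - (xh s).2 ^ 2)⁻¹ * (xh s).2)))) := by
    funext s
    simp [Penrose, linv, lsq, Prod.smul_fst, Prod.smul_snd, smul_eq_mul]
  erw [heq, hP.deriv]
  set A := (xh t).1 with hA
  set B := (xh t).2 with hB
  set A' := (xh' t).1
  set B' := (xh' t).2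
  have hAB : A + B ≠ 0 := fun h => hne' (by rw [show A^2 - B^2 = (A+B)*(A-B) by ring, h]; ring)
  have hAB' : A - B ≠ 0 := fun h => hne' (by rw [show A^2 - B^2 = (A+B)*(A-B) by ring, h]; ring)
  have h5 : (1 + (A + B) ^ 2) ≠ 0 := by positivity
  have h6 : (1 + (A - B) ^ 2) ≠ 0 := by positivity
  have h3 : (1 + ((A^2 - B^2)⁻¹ * A + (A^2 - B^2)⁻¹ * B) ^ 2) ≠ 0 := by positivity
  have h4 : (1 + ((A^2 - B^2)⁻¹ * A - (A^2 - B^2)⁻¹ * B) ^ 2) ≠ 0 := by positivity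
  simp only [lsq, Pi.mul_apply, Pi.add_apply, Pi.sub_apply, Pi.inv_apply, ← hA, ← hB]
  field_simp
  ring

/-- If a differentiable curve `x̂` with `|x̂|² ≠ 0` has bounded Lorentz squared speed
as `t → t*`, and `x̂₁ + x̂₂ → +∞` while `x̂₁ − x̂₂` tends to a finite limit `L`, then
`|(𝒫(σ(x̂)))'|²`, which equals `4|x̂'|²/((1+(x̂₁+x̂₂)²)(1+(x̂₁−x̂₂)²))`, tends to `0`. -/
theorem penrose_blowup_speed_to_zero (I : Set ℝ) (xh xh' : ℝ → ℝ × ℝ)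
    (hxh : ∀ t ∈ I, HasDerivAt xh (xh' t) t)
    (hne : ∀ t ∈ I, (xh t).1 ^ 2 - (xh t).2 ^ 2 ≠ 0)
    (tstar : ℝ) (htstar : tstar ∈ closure I)
    (hbdd : ∃ C : ℝ, ∀ᶠ t in nhdsWithin tstar I, |lsq (xh' t)| ≤ C)
    (hsum : Tendsto (fun t => (xh t).1 + (xh t).2) (nhdsWithin tstar I) atTop)
    (L : ℝ)
    (hdiff : Tendsto (fun t => (xh t).1 - (xh t).2) (nhdsWithin tstar I) (nhds L)) :
    (∀ t ∈ I, lsq (deriv (fun s => Penrose (linv (xh s))) t) =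
      4 * lsq (xh' t) /
        ((1 + ((xh t).1 + (xh t).2) ^ 2) * (1 + ((xh t).1 - (xh t).2) ^ 2))) ∧
    Tendsto (fun t => lsq (deriv (fun s => Penrose (linv (xh s))) t))
      (nhdsWithin tstar I) (nhds 0) := by
  have key := penrose_deriv_key I xh xh' hxh hne
  refine ⟨key, ?_⟩
  have hden : Tendsto (fun t => (1 + ((xh t).1 + (xh t).2) ^ 2) * (1 + ((xh t).1 - (xh t).2) ^ 2))
      (nhdsWithin tstar I) atTop := by
    have h1 : Tendsto (fun t => 1 + ((xh t).1 + (xh t).2) ^ 2) (nhdsWithin tstar I) atTop := by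
      apply tendsto_atTop_add_const_left
      have := hsum.atTop_mul_atTop₀ hsum
      simpa [sq] using this
    apply tendsto_atTop_mono _ h1
    intro t
    nlinarith [sq_nonneg ((xh t).1 + (xh t).2), sq_nonneg ((xh t).1 - (xh t).2),
      sq_nonneg (((xh t).1 + (xh t).2) * ((xh t).1 - (xh t).2))]
  obtain ⟨C, hC⟩ := hbdd
  have hmain : Tendsto (fun t => 4 * lsq (xh' t) /
        ((1 + ((xh t).1 + (xh t).2) ^ 2) * (1 + ((xh t).1 - (xh t).2) ^ 2)))
      (nhdsWithin tstar I) (nhds 0) := by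
    simp only [div_eq_mul_inv]
    apply bdd_le_mul_tendsto_zero' (4 * |C|)
    · filter_upwards [hC] with t h
      calc |4 * lsq (xh' t)| = 4 * |lsq (xh' t)| := by rw [abs_mul]; norm_num
        _ ≤ 4 * |C| := by have := h.trans (le_abs_self C); nlinarith [abs_nonneg (lsq (xh' t))]
    · exact hden.inv_tendsto_atTop
  apply hmain.congr'
  filter_upwards [self_mem_nhdsWithin] with t ht
  exact (key t ht).symm
end
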